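/- Var(√(m+n)·(M − A) − √(m+n)·T) → 0 as m, n → ∞ with n/m → λ ∈ (0,∞), where M is the Mann-Whitney statistic, A = P(Y ≥ X), and T is the Hájek projection. Consequently √(m+n)(M − A) and √(m+n)T have the same limiting distribution. -/

import Mathlib

open MeasureTheory ProbabilityTheory Finset Filter

/-- The degenerate kernel `g(x,y) = 1{x ≤ y} - A - h₁₀ x - h₀₁ y`. -/
noncomputable def stmt13G (A : ℝ) (h₁₀ h₀₁ : ℝ → ℝ) (p : ℝ × ℝ) : ℝ :=
  (if p.1 ≤ p.2 then (1 : ℝ) else 0) - A - h₁₀ p.1 - h₀₁ p.2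

lemma stmt13G_meas {A : ℝ} {h₁₀ h₀₁ : ℝ → ℝ} (h1 : Measurable h₁₀) (h2 : Measurable h₀₁) :
    Measurable (stmt13G A h₁₀ h₀₁) := by
  unfold stmt13G
  refine (((Measurable.ite (measurableSet_le measurable_fst measurable_snd)
    measurable_const measurable_const).sub measurable_const).sub
    (h1.comp measurable_fst)).sub (h2.comp measurable_snd)

lemma stmt13G_bound {A : ℝ} {h₁₀ h₀₁ : ℝ → ℝ} (hA0 : 0 ≤ A) (hA1 : A ≤ 1)
    (hb1 : ∀ x, |h₁₀ x| ≤ 1) (hb2 : ∀ y, |h₀₁ y| ≤ 1) (p : ℝ × ℝ) :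
    |stmt13G A h₁₀ h₀₁ p| ≤ 4 := by
  unfold stmt13G
  obtain ⟨c1, c2⟩ := abs_le.mp (hb1 p.1)
  obtain ⟨d1, d2⟩ := abs_le.mp (hb2 p.2)
  rw [abs_le]
  split_ifs <;> constructor <;> linarith

lemma stmt13_toReal_le_one {α : Type*} [MeasurableSpace α] (μ : Measure α)
    [IsProbabilityMeasure μ] (s : Set α) : (μ s).toReal ≤ 1 := by
  simpa using ENNReal.toReal_mono ENNReal.one_ne_top (prob_le_one (μ := μ) (s := s))

lemma stmt13_integrable_of_bound {α : Type*} [MeasurableSpace α] (μ : Measure α)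
    [IsFiniteMeasure μ] (f : α → ℝ) (C : ℝ) (hf : AEStronglyMeasurable f μ)
    (h : ∀ x, |f x| ≤ C) : Integrable f μ :=
  (integrable_const C).mono' hf (Filter.Eventually.of_forall
    (by simpa [Real.norm_eq_abs] using h))

theorem stmt_13 {Ω : Type*} [MeasurableSpace Ω] (μ : Measure Ω) [IsProbabilityMeasure μ]
    (X Y : ℕ → Ω → ℝ)
    (hmX : ∀ i, Measurable (X i)) (hmY : ∀ j, Measurable (Y j))
    (hindep : iIndepFun (Sum.elim X Y) μ)
    (hXid : ∀ i, μ.map (X i) = μ.map (X 0))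
    (hYid : ∀ j, μ.map (Y j) = μ.map (Y 0))
    (A : ℝ) (hA : A = (μ {ω | X 0 ω ≤ Y 0 ω}).toReal)
    (h₁₀ : ℝ → ℝ) (hh₁₀ : ∀ x, h₁₀ x = (μ {ω | x ≤ Y 0 ω}).toReal - A)
    (h₀₁ : ℝ → ℝ) (hh₀₁ : ∀ y, h₀₁ y = (μ {ω | X 0 ω ≤ y}).toReal - A)
    (M T : ℕ → ℕ → Ω → ℝ)
    (hM : ∀ m n ω, M m n ω = (1 / (m * n : ℝ)) *
      ∑ i ∈ Finset.range m, ∑ j ∈ Finset.range n,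
        (if X i ω ≤ Y j ω then (1 : ℝ) else 0))
    (hT : ∀ m n ω, T m n ω = (1 / (m : ℝ)) * ∑ i ∈ Finset.range m, h₁₀ (X i ω) +
      (1 / (n : ℝ)) * ∑ j ∈ Finset.range n, h₀₁ (Y j ω))
    (nseq : ℕ → ℕ) (lam : ℝ) (hlam : 0 < lam)
    (hratio : Tendsto (fun m => (nseq m : ℝ) / m) atTop (nhds lam)) :
    Tendsto (fun m => variance
        (fun ω => Real.sqrt (m + nseq m) * (M m (nseq m) ω - A) -
          Real.sqrt (m + nseq m) * T m (nseq m) ω) μ)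
      atTop (nhds 0) := by
  classical
  set κ := μ.map (X 0) with hκdef
  set ν := μ.map (Y 0) with hνdef
  haveI hκP : IsProbabilityMeasure κ := Measure.isProbabilityMeasure_map (hmX 0).aemeasurable
  haveI hνP : IsProbabilityMeasure ν := Measure.isProbabilityMeasure_map (hmY 0).aemeasurable
  have hmess : ∀ k, Measurable (Sum.elim X Y k) := by rintro (i | j); exacts [hmX i, hmY j]
  -- representations of h₁₀, h₀₁ through the marginal laws
  have hIci : ∀ x : ℝ, μ {ω | x ≤ Y 0 ω} = ν (Set.Ici x) := by
    intro x
    rw [hνdef, Measure.map_apply (hmY 0) measurableSet_Ici]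
    rfl
  have hIic : ∀ y : ℝ, μ {ω | X 0 ω ≤ y} = κ (Set.Iic y) := by
    intro y
    rw [hκdef, Measure.map_apply (hmX 0) measurableSet_Iic]
    rfl
  have hrep10 : ∀ x, h₁₀ x = (ν (Set.Ici x)).toReal - A := fun x => by rw [hh₁₀, hIci]
  have hrep01 : ∀ y, h₀₁ y = (κ (Set.Iic y)).toReal - A := fun y => by rw [hh₀₁, hIic]
  have hA0 : 0 ≤ A := hA ▸ ENNReal.toReal_nonneg
  have hA1 : A ≤ 1 := hA ▸ stmt13_toReal_le_one μ _
  have hb10 : ∀ x, |h₁₀ x| ≤ 1 := by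
    intro x
    rw [hrep10, abs_le]
    have h1 : (ν (Set.Ici x)).toReal ≤ 1 := stmt13_toReal_le_one ν _
    have h2 : (0:ℝ) ≤ (ν (Set.Ici x)).toReal := ENNReal.toReal_nonneg
    constructor <;> linarith
  have hb01 : ∀ y, |h₀₁ y| ≤ 1 := by
    intro y
    rw [hrep01, abs_le]
    have h1 : (κ (Set.Iic y)).toReal ≤ 1 := stmt13_toReal_le_one κ _
    have h2 : (0:ℝ) ≤ (κ (Set.Iic y)).toReal := ENNReal.toReal_nonneg
    constructor <;> linarith
  have hmeas10 : Measurable h₁₀ := by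
    have hanti : Antitone h₁₀ := by
      intro a b hab
      rw [hrep10 a, hrep10 b]
      have h1 : ν (Set.Ici b) ≤ ν (Set.Ici a) :=
        measure_mono (Set.Ici_subset_Ici.mpr hab)
      have h2 := ENNReal.toReal_mono (measure_ne_top ν _) h1
      linarith
    exact hanti.measurable
  have hmeas01 : Measurable h₀₁ := by
    have hmono : Monotone h₀₁ := by
      intro a b hab
      rw [hrep01 a, hrep01 b]
      have h1 : κ (Set.Iic a) ≤ κ (Set.Iic b) :=
        measure_mono (Set.Iic_subset_Iic.mpr hab)
      have h2 := ENNReal.toReal_mono (measure_ne_top κ _) h1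
      linarith
    exact hmono.measurable
  set g : ℝ × ℝ → ℝ := stmt13G A h₁₀ h₀₁ with hgdef
  have hGmeas : Measurable g := stmt13G_meas hmeas10 hmeas01
  have hGbound : ∀ p, |g p| ≤ 4 := stmt13G_bound hA0 hA1 hb10 hb01
  -- independence/joint laws
  have hindepF : ∀ i j : ℕ, IndepFun (X i) (Y j) μ := fun i j =>
    hindep.indepFun (show (Sum.inl i : ℕ ⊕ ℕ) ≠ Sum.inr j by simp)
  have hmapXY : ∀ i j, μ.map (fun ω => (X i ω, Y j ω)) = κ.prod ν := by
    intro i j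
    rw [(indepFun_iff_map_prod_eq_prod_map_map (hmX i).aemeasurable
      (hmY j).aemeasurable).mp (hindepF i j), hXid i, hYid j]
  have hsle : MeasurableSet {p : ℝ × ℝ | p.1 ≤ p.2} :=
    measurableSet_le measurable_fst measurable_snd
  have hAprod : (κ.prod ν) {p : ℝ × ℝ | p.1 ≤ p.2} = μ {ω | X 0 ω ≤ Y 0 ω} := by
    rw [← hmapXY 0 0, Measure.map_apply ((hmX 0).prodMk (hmY 0)) hsle]
    rfl
  -- Fubini computations of A
  have hmbIci : Measurable fun x : ℝ => ν (Set.Ici x) := by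
    have h := measurable_measure_prodMk_left (ν := ν) hsle
    have e : (fun x : ℝ => ν (Set.Ici x))
        = fun x => ν (Prod.mk x ⁻¹' {p : ℝ × ℝ | p.1 ≤ p.2}) := by
      funext x
      congr 1
    rw [e]
    exact h
  have hmbIic : Measurable fun y : ℝ => κ (Set.Iic y) := by
    have h := measurable_measure_prodMk_right (μ := κ) hsle
    have e : (fun y : ℝ => κ (Set.Iic y))
        = fun y => κ ((fun x => (x, y)) ⁻¹' {p : ℝ × ℝ | p.1 ≤ p.2}) := by
      funext y
      congr 1
    rw [e]
    exact h
  have hAfub1 : ∫ x, (ν (Set.Ici x)).toReal ∂κ = A := by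
    have hmb := hmbIci
    have h1 : (κ.prod ν) {p : ℝ × ℝ | p.1 ≤ p.2} = ∫⁻ x, ν (Set.Ici x) ∂κ := by
      rw [Measure.prod_apply hsle]
      congr 1
    rw [integral_toReal hmb.aemeasurable
      (Filter.Eventually.of_forall fun x => measure_lt_top ν _), ← h1, hAprod, hA]
  have hAfub2 : ∫ y, (κ (Set.Iic y)).toReal ∂ν = A := by
    have hmb := hmbIic
    have h1 : (κ.prod ν) {p : ℝ × ℝ | p.1 ≤ p.2} = ∫⁻ y, κ (Set.Iic y) ∂ν := by
      rw [Measure.prod_apply_symm hsle]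
      congr 1
    rw [integral_toReal hmb.aemeasurable
      (Filter.Eventually.of_forall fun y => measure_lt_top κ _), ← h1, hAprod, hA]
  -- zero means of the projections
  have hint10 : ∫ x, h₁₀ x ∂κ = 0 := by
    have hint : Integrable (fun x => (ν (Set.Ici x)).toReal) κ := by
      refine stmt13_integrable_of_bound κ _ 1 ?_ ?_
      · exact hmbIci.ennreal_toReal.aestronglyMeasurable
      · intro x
        rw [abs_of_nonneg ENNReal.toReal_nonneg]
        exact stmt13_toReal_le_one ν _
    simp only [hrep10]
    rw [integral_sub hint (integrable_const A), hAfub1, integral_const]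
    simp
  have hint01 : ∫ y, h₀₁ y ∂ν = 0 := by
    have hint : Integrable (fun y => (κ (Set.Iic y)).toReal) ν := by
      refine stmt13_integrable_of_bound ν _ 1 ?_ ?_
      · exact hmbIic.ennreal_toReal.aestronglyMeasurable
      · intro y
        rw [abs_of_nonneg ENNReal.toReal_nonneg]
        exact stmt13_toReal_le_one κ _
    simp only [hrep01]
    rw [integral_sub hint (integrable_const A), hAfub2, integral_const]
    simp
  -- conditional means of g vanish
  have hy0 : ∀ x, ∫ y, g (x, y) ∂ν = 0 := by
    intro x
    have e : ∀ y : ℝ, g (x, y) =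
        (Set.Ici x).indicator (fun _ => (1:ℝ)) y - A - h₁₀ x - h₀₁ y := by
      intro y
      simp [hgdef, stmt13G, Set.indicator_apply, Set.mem_Ici]
    simp only [e]
    have i1 : Integrable ((Set.Ici x).indicator fun _ => (1:ℝ)) ν :=
      (integrable_const (1:ℝ)).indicator measurableSet_Ici
    have i4 : Integrable h₀₁ ν :=
      stmt13_integrable_of_bound ν _ 1 hmeas01.aestronglyMeasurable hb01
    have iA : Integrable (fun y : ℝ => (Set.Ici x).indicator (fun _ => (1:ℝ)) y - A) ν := by
      exact i1.sub (integrable_const A)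
    have iB : Integrable (fun y : ℝ =>
        (Set.Ici x).indicator (fun _ => (1:ℝ)) y - A - h₁₀ x) ν := by
      exact iA.sub (integrable_const (h₁₀ x))
    rw [integral_sub iB i4, integral_sub iA (integrable_const (h₁₀ x)),
      integral_sub i1 (integrable_const A), integral_indicator_const _ measurableSet_Ici,
      hint01]
    simp only [integral_const, measure_univ, measureReal_def, ENNReal.toReal_one, smul_eq_mul, one_mul,
      one_smul, sub_zero]
    rw [hrep10 x]
    ring
  have hx0 : ∀ y, ∫ x, g (x, y) ∂κ = 0 := by
    intro y
    have e : ∀ x : ℝ, g (x, y) =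
        (Set.Iic y).indicator (fun _ => (1:ℝ)) x - A - h₁₀ x - h₀₁ y := by
      intro x
      simp [hgdef, stmt13G, Set.indicator_apply, Set.mem_Iic]
    simp only [e]
    have i1 : Integrable ((Set.Iic y).indicator fun _ => (1:ℝ)) κ :=
      (integrable_const (1:ℝ)).indicator measurableSet_Iic
    have i3 : Integrable h₁₀ κ :=
      stmt13_integrable_of_bound κ _ 1 hmeas10.aestronglyMeasurable hb10
    have iA : Integrable (fun x : ℝ => (Set.Iic y).indicator (fun _ => (1:ℝ)) x - A) κ := by
      exact i1.sub (integrable_const A)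
    have iB : Integrable (fun x : ℝ =>
        (Set.Iic y).indicator (fun _ => (1:ℝ)) x - A - h₁₀ x) κ := by
      exact iA.sub i3
    rw [integral_sub iB (integrable_const (h₀₁ y)), integral_sub iA i3,
      integral_sub i1 (integrable_const A), integral_indicator_const _ measurableSet_Iic,
      hint10]
    simp only [integral_const, measure_univ, measureReal_def, ENNReal.toReal_one, smul_eq_mul, one_mul,
      one_smul, sub_zero]
    rw [hrep01 y]
    ring
  -- mean zero of g(X i, Y j)
  have hGpm : ∀ i j, Measurable fun ω => g (X i ω, Y j ω) := fun i j =>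
    hGmeas.comp ((hmX i).prodMk (hmY j))
  have hGprodInt : Integrable g (κ.prod ν) :=
    stmt13_integrable_of_bound _ _ 4 hGmeas.aestronglyMeasurable hGbound
  have hmean0 : ∀ i j, ∫ ω, g (X i ω, Y j ω) ∂μ = 0 := by
    intro i j
    have h1 : ∫ p, g p ∂(μ.map fun ω => (X i ω, Y j ω)) = ∫ ω, g (X i ω, Y j ω) ∂μ :=
      integral_map ((hmX i).prodMk (hmY j)).aemeasurable hGmeas.aestronglyMeasurable
    rw [← h1, hmapXY i j, integral_prod _ hGprodInt]
    simp only [hy0, integral_zero]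
  -- Z1 : distinct X indices and distinct Y indices
  have hZ1 : ∀ i j k l : ℕ, i ≠ k → j ≠ l →
      ∫ ω, g (X i ω, Y j ω) * g (X k ω, Y l ω) ∂μ = 0 := by
    intro i j k l hik hjl
    have hpair : IndepFun (fun ω => (X i ω, Y j ω)) (fun ω => (X k ω, Y l ω)) μ :=
      hindep.indepFun_prodMk_prodMk hmess (Sum.inl i) (Sum.inr j) (Sum.inl k) (Sum.inr l)
        (by simp [hik]) (by simp) (by simp) (by simp [hjl])
    have h2 : IndepFun (fun ω => g (X i ω, Y j ω)) (fun ω => g (X k ω, Y l ω)) μ :=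
      hpair.comp hGmeas hGmeas
    have hh := h2.integral_mul_eq_mul_integral (hGpm i j).aestronglyMeasurable (hGpm k l).aestronglyMeasurable
    rw [hmean0 i j, hmean0 k l, mul_zero] at hh
    exact hh
  -- Z2 : same X index, distinct Y indices
  have hZ2 : ∀ i j l : ℕ, j ≠ l →
      ∫ ω, g (X i ω, Y j ω) * g (X i ω, Y l ω) ∂μ = 0 := by
    intro i j l hjl
    have hYpair : IndepFun (Y j) (Y l) μ :=
      hindep.indepFun (show (Sum.inr j : ℕ ⊕ ℕ) ≠ Sum.inr l by simp [hjl])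
    have hmapYY : μ.map (fun ω => (Y j ω, Y l ω)) = ν.prod ν := by
      rw [(indepFun_iff_map_prod_eq_prod_map_map (hmY j).aemeasurable
        (hmY l).aemeasurable).mp hYpair, hYid j, hYid l]
    have hXp : IndepFun (X i) (fun ω => (Y j ω, Y l ω)) μ :=
      (hindep.indepFun_prodMk hmess (Sum.inr j) (Sum.inr l) (Sum.inl i)
        (by simp) (by simp)).symm
    have hmap3 : μ.map (fun ω => (X i ω, (Y j ω, Y l ω))) = κ.prod (ν.prod ν) := by
      rw [(indepFun_iff_map_prod_eq_prod_map_map (hmX i).aemeasurable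
        ((hmY j).prodMk (hmY l)).aemeasurable).mp hXp, hXid i, hmapYY]
    have hHmeas : Measurable fun p : ℝ × (ℝ × ℝ) => g (p.1, p.2.1) * g (p.1, p.2.2) :=
      (hGmeas.comp (measurable_fst.prodMk (measurable_fst.comp measurable_snd))).mul
        (hGmeas.comp (measurable_fst.prodMk (measurable_snd.comp measurable_snd)))
    have hHint : Integrable (fun p : ℝ × (ℝ × ℝ) => g (p.1, p.2.1) * g (p.1, p.2.2))
        (κ.prod (ν.prod ν)) := by
      refine stmt13_integrable_of_bound _ _ 16 hHmeas.aestronglyMeasurable fun p => ?_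
      rw [abs_mul]
      have h1 := hGbound (p.1, p.2.1)
      have h2 := hGbound (p.1, p.2.2)
      nlinarith [abs_nonneg (g (p.1, p.2.1)), abs_nonneg (g (p.1, p.2.2))]
    have h1 : ∫ p : ℝ × (ℝ × ℝ), g (p.1, p.2.1) * g (p.1, p.2.2)
          ∂(μ.map fun ω => (X i ω, (Y j ω, Y l ω)))
        = ∫ ω, g (X i ω, Y j ω) * g (X i ω, Y l ω) ∂μ :=
      integral_map ((hmX i).prodMk ((hmY j).prodMk (hmY l))).aemeasurable
        hHmeas.aestronglyMeasurable
    rw [← h1, hmap3, integral_prod _ hHint]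
    have inner : ∀ x : ℝ, ∫ q : ℝ × ℝ, g (x, q.1) * g (x, q.2) ∂(ν.prod ν) = 0 := by
      intro x
      rw [integral_prod_mul (fun y => g (x, y)) (fun y => g (x, y)), hy0 x, mul_zero]
    simp only [inner, integral_zero]
  -- Z3 : distinct X indices, same Y index
  have hZ3 : ∀ i k j : ℕ, i ≠ k →
      ∫ ω, g (X i ω, Y j ω) * g (X k ω, Y j ω) ∂μ = 0 := by
    intro i k j hik
    have hXpair : IndepFun (X i) (X k) μ :=
      hindep.indepFun (show (Sum.inl i : ℕ ⊕ ℕ) ≠ Sum.inl k by simp [hik])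
    have hmapXX : μ.map (fun ω => (X i ω, X k ω)) = κ.prod κ := by
      rw [(indepFun_iff_map_prod_eq_prod_map_map (hmX i).aemeasurable
        (hmX k).aemeasurable).mp hXpair, hXid i, hXid k]
    have hYp : IndepFun (Y j) (fun ω => (X i ω, X k ω)) μ :=
      (hindep.indepFun_prodMk hmess (Sum.inl i) (Sum.inl k) (Sum.inr j)
        (by simp) (by simp)).symm
    have hmap3 : μ.map (fun ω => (Y j ω, (X i ω, X k ω))) = ν.prod (κ.prod κ) := by
      rw [(indepFun_iff_map_prod_eq_prod_map_map (hmY j).aemeasurable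
        ((hmX i).prodMk (hmX k)).aemeasurable).mp hYp, hYid j, hmapXX]
    have hHmeas : Measurable fun p : ℝ × (ℝ × ℝ) => g (p.2.1, p.1) * g (p.2.2, p.1) :=
      (hGmeas.comp ((measurable_fst.comp measurable_snd).prodMk measurable_fst)).mul
        (hGmeas.comp ((measurable_snd.comp measurable_snd).prodMk measurable_fst))
    have hHint : Integrable (fun p : ℝ × (ℝ × ℝ) => g (p.2.1, p.1) * g (p.2.2, p.1))
        (ν.prod (κ.prod κ)) := by
      refine stmt13_integrable_of_bound _ _ 16 hHmeas.aestronglyMeasurable fun p => ?_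
      rw [abs_mul]
      have h1 := hGbound (p.2.1, p.1)
      have h2 := hGbound (p.2.2, p.1)
      nlinarith [abs_nonneg (g (p.2.1, p.1)), abs_nonneg (g (p.2.2, p.1))]
    have h1 : ∫ p : ℝ × (ℝ × ℝ), g (p.2.1, p.1) * g (p.2.2, p.1)
          ∂(μ.map fun ω => (Y j ω, (X i ω, X k ω)))
        = ∫ ω, g (X i ω, Y j ω) * g (X k ω, Y j ω) ∂μ :=
      integral_map ((hmY j).prodMk ((hmX i).prodMk (hmX k))).aemeasurable
        hHmeas.aestronglyMeasurable
    rw [← h1, hmap3, integral_prod _ hHint]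
    have inner : ∀ y : ℝ, ∫ q : ℝ × ℝ, g (q.1, y) * g (q.2, y) ∂(κ.prod κ) = 0 := by
      intro y
      rw [integral_prod_mul (fun x => g (x, y)) (fun x => g (x, y)), hx0 y, mul_zero]
    simp only [inner, integral_zero]
  -- all off-diagonal covariances vanish
  have hZZ : ∀ p q : ℕ × ℕ, p ≠ q →
      ∫ ω, g (X p.1 ω, Y p.2 ω) * g (X q.1 ω, Y q.2 ω) ∂μ = 0 := by
    rintro ⟨i, j⟩ ⟨k, l⟩ hpq
    by_cases hik : i = k
    · subst hik
      have hjl : j ≠ l := fun h => hpq (by rw [h])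
      exact hZ2 i j l hjl
    · by_cases hjl : j = l
      · subst hjl
        exact hZ3 i k j hik
      · exact hZ1 i j k l hik hjl
  -- integrability of products
  have hprodInt : ∀ p q : ℕ × ℕ,
      Integrable (fun ω => g (X p.1 ω, Y p.2 ω) * g (X q.1 ω, Y q.2 ω)) μ := by
    intro p q
    refine stmt13_integrable_of_bound _ _ 16
      (((hGpm p.1 p.2).mul (hGpm q.1 q.2)).aestronglyMeasurable) fun ω => ?_
    rw [abs_mul]
    have h1 := hGbound (X p.1 ω, Y p.2 ω)
    have h2 := hGbound (X q.1 ω, Y q.2 ω)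
    nlinarith [abs_nonneg (g (X p.1 ω, Y p.2 ω)), abs_nonneg (g (X q.1 ω, Y q.2 ω))]
  have hdiag : ∀ p : ℕ × ℕ,
      ∫ ω, g (X p.1 ω, Y p.2 ω) * g (X p.1 ω, Y p.2 ω) ∂μ ≤ 16 := by
    intro p
    calc ∫ ω, g (X p.1 ω, Y p.2 ω) * g (X p.1 ω, Y p.2 ω) ∂μ
        ≤ ∫ _, (16:ℝ) ∂μ := by
          refine integral_mono (hprodInt p p) (integrable_const 16) fun ω => ?_
          have h1 := abs_le.mp (hGbound (X p.1 ω, Y p.2 ω))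
          nlinarith [h1.1, h1.2]
      _ = 16 := by simp
  -- second moment bound for the sum
  have hEsq : ∀ m n : ℕ,
      ∫ ω, (∑ p ∈ Finset.range m ×ˢ Finset.range n, g (X p.1 ω, Y p.2 ω))^2 ∂μ
        ≤ 16 * (m * n) := by
    intro m n
    set s := Finset.range m ×ˢ Finset.range n with hs
    have expand : ∀ ω, (∑ p ∈ s, g (X p.1 ω, Y p.2 ω))^2
        = ∑ p ∈ s, ∑ q ∈ s, g (X p.1 ω, Y p.2 ω) * g (X q.1 ω, Y q.2 ω) := by
      intro ω
      rw [sq, Finset.sum_mul_sum]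
    calc ∫ ω, (∑ p ∈ s, g (X p.1 ω, Y p.2 ω))^2 ∂μ
        = ∫ ω, ∑ p ∈ s, ∑ q ∈ s, g (X p.1 ω, Y p.2 ω) * g (X q.1 ω, Y q.2 ω) ∂μ := by
          exact integral_congr_ae (Filter.Eventually.of_forall expand)
      _ = ∑ p ∈ s, ∫ ω, ∑ q ∈ s, g (X p.1 ω, Y p.2 ω) * g (X q.1 ω, Y q.2 ω) ∂μ := by
          exact integral_finset_sum s fun p _ => integrable_finset_sum s fun q _ => hprodInt p q
      _ = ∑ p ∈ s, ∑ q ∈ s, ∫ ω, g (X p.1 ω, Y p.2 ω) * g (X q.1 ω, Y q.2 ω) ∂μ := by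
          exact Finset.sum_congr rfl fun p _ =>
            integral_finset_sum s fun q _ => hprodInt p q
      _ ≤ ∑ p ∈ s, ∑ q ∈ s, (if p = q then (16:ℝ) else 0) := by
          refine Finset.sum_le_sum fun p _ => Finset.sum_le_sum fun q _ => ?_
          by_cases h : p = q
          · subst h
            simpa using hdiag p
          · rw [hZZ p q h]
            simp [h]
      _ = ∑ p ∈ s, (16:ℝ) := by
          refine Finset.sum_congr rfl fun p hp => ?_
          rw [Finset.sum_ite_eq s p fun _ => (16:ℝ)]
          simp [hp]
      _ = 16 * (m * n) := by
          rw [Finset.sum_const, hs, Finset.card_product, Finset.card_range,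
            Finset.card_range]
          simp [mul_comm]
  -- pointwise decomposition of M - A - T
  have hDrep : ∀ m n : ℕ, 1 ≤ m → 1 ≤ n → ∀ ω,
      M m n ω - A - T m n ω = (1 / (m * n : ℝ)) *
        ∑ p ∈ Finset.range m ×ˢ Finset.range n, g (X p.1 ω, Y p.2 ω) := by
    intro m n hm hn ω
    have hm' : (m:ℝ) ≠ 0 := Nat.cast_ne_zero.mpr (by omega)
    have hn' : (n:ℝ) ≠ 0 := Nat.cast_ne_zero.mpr (by omega)
    have hsum : ∑ p ∈ Finset.range m ×ˢ Finset.range n, g (X p.1 ω, Y p.2 ω)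
        = (∑ i ∈ Finset.range m, ∑ j ∈ Finset.range n,
            (if X i ω ≤ Y j ω then (1:ℝ) else 0))
          - (m:ℝ) * ((n:ℝ) * A) - (n:ℝ) * ∑ i ∈ Finset.range m, h₁₀ (X i ω)
          - (m:ℝ) * ∑ j ∈ Finset.range n, h₀₁ (Y j ω) := by
      rw [Finset.sum_product]
      simp only [hgdef, stmt13G, Finset.sum_sub_distrib, Finset.sum_const,
        Finset.card_range, nsmul_eq_mul, Finset.mul_sum]
      try ring
    rw [hM, hT, hsum]
    field_simp
    ring
  -- variance bound
  have hvar : ∀ m n : ℕ, 1 ≤ m → 1 ≤ n →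
      variance (fun ω => Real.sqrt (m + n) * (M m n ω - A) -
        Real.sqrt (m + n) * T m n ω) μ ≤ ((m:ℝ) + n) * (16 / (m * n)) := by
    intro m n hm hn
    have hm' : (0:ℝ) < m := by exact_mod_cast Nat.lt_of_lt_of_le Nat.zero_lt_one hm
    have hn' : (0:ℝ) < n := by exact_mod_cast Nat.lt_of_lt_of_le Nat.zero_lt_one hn
    set c : ℝ := Real.sqrt (m + n) with hc
    set D : Ω → ℝ := fun ω => (1 / (m * n : ℝ)) *
      ∑ p ∈ Finset.range m ×ˢ Finset.range n, g (X p.1 ω, Y p.2 ω) with hD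
    have hfun : (fun ω => c * (M m n ω - A) - c * T m n ω) = fun ω => c * D ω := by
      funext ω
      simp only [hD]
      rw [← hDrep m n hm hn ω]
      ring
    rw [hfun]
    have hDmeas : Measurable D := by
      apply Measurable.const_mul
      exact Finset.measurable_sum _ fun p _ => hGpm p.1 p.2
    have hcDmeas : AEStronglyMeasurable (fun ω => c * D ω) μ :=
      (hDmeas.const_mul c).aestronglyMeasurable
    calc variance (fun ω => c * D ω) μ
        ≤ μ[(fun ω => c * D ω) ^ 2] := variance_le_expectation_sq hcDmeas
      _ = c ^ 2 * ∫ ω, D ω ^ 2 ∂μ := by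
          simp only [Pi.pow_apply]
          have e : ∀ ω, (c * D ω) ^ 2 = c ^ 2 * D ω ^ 2 := fun ω => by ring
          simp only [e]
          exact integral_const_mul _ _
      _ ≤ ((m:ℝ) + n) * (16 / (m * n)) := by
          have hc2 : c ^ 2 = (m:ℝ) + n := Real.sq_sqrt (by positivity)
          rw [hc2]
          refine mul_le_mul_of_nonneg_left ?_ (by positivity)
          have e : ∀ ω, D ω ^ 2 = (1 / ((m:ℝ) * n)) ^ 2 *
              (∑ p ∈ Finset.range m ×ˢ Finset.range n, g (X p.1 ω, Y p.2 ω)) ^ 2 := by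
            intro ω
            rw [hD]
            ring
          calc ∫ ω, D ω ^ 2 ∂μ
              = (1 / ((m:ℝ) * n)) ^ 2 *
                ∫ ω, (∑ p ∈ Finset.range m ×ˢ Finset.range n, g (X p.1 ω, Y p.2 ω)) ^ 2 ∂μ := by
                simp only [e]
                exact integral_const_mul _ _
            _ ≤ (1 / ((m:ℝ) * n)) ^ 2 * (16 * (m * n)) :=
                mul_le_mul_of_nonneg_left (hEsq m n) (by positivity)
            _ = 16 / ((m:ℝ) * n) := by
                field_simp
  -- limit computations
  have htop : Tendsto (fun m => ((nseq m : ℝ))) atTop atTop := by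
    have h1 : Tendsto (fun m : ℕ => ((nseq m : ℝ) / m) * m) atTop atTop :=
      Tendsto.pos_mul_atTop hlam hratio tendsto_natCast_atTop_atTop
    refine Tendsto.congr' ?_ h1
    filter_upwards [eventually_ge_atTop 1] with m hm
    have hm' : (m:ℝ) ≠ 0 := Nat.cast_ne_zero.mpr (by omega)
    field_simp
  have hev1 : ∀ᶠ m in atTop, 1 ≤ nseq m := by
    filter_upwards [htop.eventually_ge_atTop (1:ℝ)] with m hm
    exact_mod_cast Nat.one_le_cast.mp hm
  have h1m : Tendsto (fun m : ℕ => 1 / (m:ℝ)) atTop (nhds 0) :=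
    tendsto_one_div_atTop_nhds_zero_nat
  have h1n : Tendsto (fun m : ℕ => 1 / ((nseq m : ℝ))) atTop (nhds 0) := by
    simp only [one_div]
    exact htop.inv_tendsto_atTop
  have hB : Tendsto (fun m : ℕ => 16 * (1 / (m:ℝ) + 1 / (nseq m : ℝ))) atTop (nhds 0) := by
    have := (h1m.add h1n).const_mul (16:ℝ)
    simpa using this
  refine squeeze_zero' (Filter.Eventually.of_forall fun m => variance_nonneg _ μ) ?_ hB
  filter_upwards [eventually_ge_atTop 1, hev1] with m hm hn
  have h := hvar m (nseq m) hm hn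
  have hm' : (m:ℝ) ≠ 0 := Nat.cast_ne_zero.mpr (by omega)
  have hn' : ((nseq m : ℕ):ℝ) ≠ 0 := Nat.cast_ne_zero.mpr (by omega)
  have e : ((m:ℝ) + nseq m) * (16 / (m * nseq m)) =
      16 * (1 / (m:ℝ) + 1 / (nseq m : ℝ)) := by
    field_simp
    ring
  rw [e] at h
  exact h
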